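/- arXiv:1505.07986 — 2 statements merged into one kernel-verified Lean document; each statement's English description precedes it below -/
import Mathlib

section
/- Suppose γ : I → ℍⁿ is a horizontal curve. Then the Lipschitz constant of γ with respect to the Carnot–Carathéodory distance on the target equals the Lipschitz constant of p ∘ γ with respect to the Euclidean distance: Lip_ℍ(γ) = Lip_𝔼(p ∘ γ). -/
open MeasureTheory Filter Set

noncomputable section

/-- The underlying space of the Heisenberg group `ℍⁿ = ℝ^{2n+1}` with the Euclidean structure. -/
abbrev H (n : ℕ) : Type := EuclideanSpace ℝ (Fin (2*n+1))

namespace Heis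

variable (n : ℕ)

/-- Index of the `i`-th coordinate of the first block `a ∈ ℝⁿ`. -/
def idx₁ (i : Fin n) : Fin (2*n+1) := ⟨i.1, by have := i.2; omega⟩

/-- Index of the `i`-th coordinate of the second block `b ∈ ℝⁿ`. -/
def idx₂ (i : Fin n) : Fin (2*n+1) := ⟨n + i.1, by have := i.2; omega⟩

/-- Index of the last (vertical) coordinate `c`. -/
def idxc : Fin (2*n+1) := ⟨2*n, by omega⟩

/-- Projection `p : ℍⁿ → ℝ^{2n}` onto the first `2n` coordinates. -/
def proj (x : H n) : EuclideanSpace ℝ (Fin (2*n)) :=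
  WithLp.toLp 2 (fun k => x ⟨k.1, by have := k.2; omega⟩)

/-- The Euclidean inner product. -/
def iprod {m : ℕ} (x y : EuclideanSpace ℝ (Fin m)) : ℝ := ∑ k, x k * y k

/-- The Heisenberg group law
`(a,b,c)·(a',b',c') = (a+a', b+b', c+c'−2(⟨a,b'⟩−⟨b,a'⟩))`. -/
def Hmul (x y : H n) : H n := WithLp.toLp 2 (fun k =>
  x k + y k - (if (k : ℕ) = 2*n then
    2 * ∑ i : Fin n, (x (idx₁ n i) * y (idx₂ n i) - x (idx₂ n i) * y (idx₁ n i)) else 0))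

/-- Dilations `δ_r(a,b,c) = (ra, rb, r²c)`. -/
def dil (r : ℝ) (x : H n) : H n :=
  WithLp.toLp 2 (fun k => if (k : ℕ) = 2*n then r^2 * x k else r * x k)

/-- The horizontal vector field `X_i(a,b,c) = e_i + 2 b_i e_{2n+1}`. -/
def Xvf (i : Fin n) (x : H n) : H n :=
  EuclideanSpace.single (idx₁ n i) 1 + (2 * x (idx₂ n i)) • EuclideanSpace.single (idxc n) 1

/-- The horizontal vector field `Y_i(a,b,c) = e_{n+i} − 2 a_i e_{2n+1}`. -/
def Yvf (i : Fin n) (x : H n) : H n :=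
  EuclideanSpace.single (idx₂ n i) 1 - (2 * x (idx₁ n i)) • EuclideanSpace.single (idxc n) 1

/-- `E ∈ V = Span{X_i, Y_i : 1 ≤ i ≤ n}`. -/
def memV (E : H n → H n) : Prop :=
  ∃ q q' : Fin n → ℝ, ∀ x, E x = ∑ i, (q i • Xvf n i x + q' i • Yvf n i x)

/-- The norm `ω` on `V` making `{X_i, Y_i}` orthonormal; equivalently `ω(E) = |p(E)|`. -/
def omega (E : H n → H n) : ℝ := ‖proj n (E 0)‖

/-- `γ` is absolutely continuous on `I`: differentiable a.e. on `I` and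
`γ(t) − γ(s) = ∫_s^t γ'` for all `s, t ∈ I`. -/
def IsAC (I : Set ℝ) (γ : ℝ → H n) : Prop :=
  (∀ᵐ t ∂(volume.restrict I), DifferentiableAt ℝ γ t) ∧
  ∀ s ∈ I, ∀ t ∈ I, IntervalIntegrable (deriv γ) volume s t ∧
    γ t - γ s = ∫ u in s..t, deriv γ u

/-- The pointwise horizontality condition
`γ'(t) = ∑ᵢ (hᵢ(t) Xᵢ(γ(t)) + h_{n+i}(t) Yᵢ(γ(t)))`. -/
def horizCondition (γ : ℝ → H n) (h : ℝ → Fin (2*n) → ℝ) (t : ℝ) : Prop :=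
  deriv γ t = ∑ i : Fin n,
    (h t ⟨i.1, by have := i.2; omega⟩ • Xvf n i (γ t)
      + h t ⟨n + i.1, by have := i.2; omega⟩ • Yvf n i (γ t))

/-- `γ` satisfies the horizontality condition a.e. on `I` for some `h : I → ℝ^{2n}`. -/
def IsHorizontal (I : Set ℝ) (γ : ℝ → H n) : Prop :=
  ∃ h : ℝ → Fin (2*n) → ℝ, ∀ᵐ t ∂(volume.restrict I), horizCondition n γ h t

/-- A horizontal curve: absolutely continuous and horizontal on `I`. -/
def IsHorizontalCurve (I : Set ℝ) (γ : ℝ → H n) : Prop :=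
  IsAC n I γ ∧ IsHorizontal n I γ

/-- The horizontal length `L_ℍ(γ) = ∫_I |h| = ∫_I |(p ∘ γ)'|`. -/
def hLength (I : Set ℝ) (γ : ℝ → H n) : ℝ := ∫ t in I, ‖proj n (deriv γ t)‖

/-- The Carnot–Carathéodory distance:
the infimum of horizontal lengths of horizontal curves joining `x` to `y`. -/
def ccDist (x y : H n) : ℝ :=
  sInf {L | ∃ (a b : ℝ) (γ : ℝ → H n), a < b ∧ IsHorizontalCurve n (Set.Icc a b) γ ∧
    γ a = x ∧ γ b = y ∧ L = hLength n (Set.Icc a b) γ}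

/-- `f` is Lipschitz with respect to the Carnot–Carathéodory distance. -/
def LipschitzCC (f : H n → ℝ) : Prop :=
  ∃ K : ℝ, 0 ≤ K ∧ ∀ x y, |f x - f y| ≤ K * ccDist n x y

/-- The Lipschitz constant `Lip_ℍ(f)` with respect to the Carnot–Carathéodory distance. -/
def lipH (f : H n → ℝ) : ℝ :=
  sInf {K | 0 ≤ K ∧ ∀ x y, |f x - f y| ≤ K * ccDist n x y}

/-- The directional derivative `Ef(x) = lim_{t→0} (f(x + tE(x)) − f(x))/t` exists and is `D`. -/
def HasDirDeriv (f : H n → ℝ) (E : H n → H n) (x : H n) (D : ℝ) : Prop :=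
  Tendsto (fun t : ℝ => (f (x + t • E x) - f x) / t) (nhdsWithin 0 {(0:ℝ)}ᶜ) (nhds D)

/-- `L : ℍⁿ → ℝ` is ℍ-linear: `L(xy) = L(x)+L(y)` and `L(δ_r x) = r L(x)` for `r > 0`. -/
def IsHLinear (L : H n → ℝ) : Prop :=
  (∀ x y, L (Hmul n x y) = L x + L y) ∧ ∀ r : ℝ, 0 < r → ∀ x, L (dil n r x) = r * L x

/-- `f` is Pansu differentiable at `x` with (ℍ-linear) Pansu derivative `L`:
`lim_{y→x} |f(y) − f(x) − L(x⁻¹y)|/d(x,y) = 0`, where `x⁻¹ = −x`. -/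
def PansuDiffAt (f : H n → ℝ) (x : H n) (L : H n → ℝ) : Prop :=
  IsHLinear n L ∧
  Tendsto (fun y => |f y - f x - L (Hmul n (-x) y)| / ccDist n x y)
    (nhdsWithin x {x}ᶜ) (nhds 0)

/-- `x ∈ ℚ^{2n+1}`: all coordinates rational. -/
def isRat (x : H n) : Prop := ∀ k, ∃ q : ℚ, x k = (q : ℝ)

/-- Build the point `(a, b, c) ∈ ℍⁿ` from `a, b ∈ ℝⁿ` and `c ∈ ℝ`. -/
def mkH (a b : Fin n → ℝ) (c : ℝ) : H n := WithLp.toLp 2 (fun k =>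
  if h : (k : ℕ) < n then a ⟨k.1, h⟩
  else if h' : (k : ℕ) < 2*n then b ⟨k.1 - n, by omega⟩ else c)

/-- First segment direction `(a − bc/L², b + ac/L², 0)` of the good curve to `y = (a,b,c)`. -/
def w₁ (y : H n) : H n :=
  mkH n (fun i => y (idx₁ n i) - y (idx₂ n i) * y (idxc n) / ‖proj n y‖^2)
        (fun i => y (idx₂ n i) + y (idx₁ n i) * y (idxc n) / ‖proj n y‖^2) 0

/-- Second segment direction `(a + bc/L², b − ac/L², 2c)` of the good curve to `y = (a,b,c)`. -/
def w₂ (y : H n) : H n :=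
  mkH n (fun i => y (idx₁ n i) + y (idx₂ n i) * y (idxc n) / ‖proj n y‖^2)
        (fun i => y (idx₂ n i) - y (idx₁ n i) * y (idxc n) / ‖proj n y‖^2) (2 * y (idxc n))

/-- The piecewise-linear horizontal curve `γ_y` joining `0` to `y`. -/
def goodCurve (y : H n) : ℝ → H n := fun t =>
  if t ≤ 1/2 then t • w₁ n y else (1/2 : ℝ) • w₁ n y + (t - 1/2) • w₂ n y

end Heis


/-- Lipschitz constant of a curve `I → ℍⁿ` with respect to the Carnot–Carathéodory
distance on the target. -/
def lipOnCC (n : ℕ) (I : Set ℝ) (γ : ℝ → H n) : ℝ :=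
  sInf {K | 0 ≤ K ∧ ∀ s ∈ I, ∀ t ∈ I, Heis.ccDist n (γ s) (γ t) ≤ K * |s - t|}

/-- Lipschitz constant of a curve `I → ℝ^{2n}` with respect to the Euclidean
distance on the target. -/
def lipOnE (n : ℕ) (I : Set ℝ) (g : ℝ → EuclideanSpace ℝ (Fin (2*n))) : ℝ :=
  sInf {K | 0 ≤ K ∧ ∀ s ∈ I, ∀ t ∈ I, ‖g s - g t‖ ≤ K * |s - t|}

namespace StatementTwoAux

open Heis MeasureTheory Filter Set

variable {n : ℕ}

/-- The projection as a continuous linear map. -/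
noncomputable def projCLM (n : ℕ) : H n →L[ℝ] EuclideanSpace ℝ (Fin (2*n)) :=
  LinearMap.toContinuousLinearMap
  { toFun := Heis.proj n
    map_add' := by intro x y; ext k; simp [Heis.proj]
    map_smul' := by intro c x; ext k; simp [Heis.proj] }

lemma projCLM_apply (n : ℕ) (x : H n) : projCLM n x = Heis.proj n x := rfl

lemma proj_zero : Heis.proj n (0 : H n) = 0 := (projCLM n).map_zero

lemma proj_neg (x : H n) : Heis.proj n (-x) = -Heis.proj n x := (projCLM n).map_neg x

lemma measurePreserving_reflect (c : ℝ) :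
    MeasurePreserving (fun u : ℝ => c - u) volume volume := by
  have h1 : MeasurePreserving (fun u : ℝ => -u) volume volume := Measure.measurePreserving_neg _
  have h2 : MeasurePreserving (fun u : ℝ => c + u) volume volume :=
    measurePreserving_add_left volume c
  simpa [Function.comp_def, sub_eq_add_neg] using h2.comp h1

lemma ae_reflect {S : Set ℝ} (hS : MeasurableSet S) {c : ℝ} (hc : ∀ u ∈ S, c - u ∈ S)
    {P : ℝ → Prop} (h : ∀ᵐ t ∂volume.restrict S, P t) :
    ∀ᵐ u ∂volume.restrict S, P (c - u) := by
  rw [ae_iff, Measure.restrict_apply' hS] at h ⊢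
  refine measure_mono_null ?_
    ((measurePreserving_reflect c).quasiMeasurePreserving.preimage_null h)
  rintro u ⟨hu, huS⟩
  exact ⟨hu, hc u huS⟩

lemma isHC_mono {I J : Set ℝ} (hJI : J ⊆ I) {γ : ℝ → H n}
    (h : IsHorizontalCurve n I γ) : IsHorizontalCurve n J γ := by
  obtain ⟨⟨hd, hint⟩, hh, hhor⟩ := h
  exact ⟨⟨ae_restrict_of_ae_restrict_of_subset hJI hd,
    fun s hs t ht => hint s (hJI hs) t (hJI ht)⟩,
    hh, ae_restrict_of_ae_restrict_of_subset hJI hhor⟩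

lemma hLength_nonneg {S : Set ℝ} {γ : ℝ → H n} : 0 ≤ hLength n S γ :=
  integral_nonneg fun _ => norm_nonneg _

lemma ccDist_bddBelow (x y : H n) :
    BddBelow {L | ∃ (a b : ℝ) (γ : ℝ → H n), a < b ∧ IsHorizontalCurve n (Set.Icc a b) γ ∧
      γ a = x ∧ γ b = y ∧ L = hLength n (Set.Icc a b) γ} := by
  refine ⟨0, ?_⟩
  rintro L ⟨a, b, σ, -, -, -, -, rfl⟩
  exact hLength_nonneg

lemma ccDist_le {a b : ℝ} {γ : ℝ → H n} (hab : a < b)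
    (h : IsHorizontalCurve n (Icc a b) γ) :
    ccDist n (γ a) (γ b) ≤ hLength n (Icc a b) γ :=
  csInf_le (ccDist_bddBelow _ _) ⟨a, b, γ, hab, h, rfl, rfl, rfl⟩

lemma ccDist_self_nonpos (x : H n) : ccDist n x x ≤ 0 := by
  have hd : deriv (fun _ : ℝ => x) = fun _ => (0 : H n) := by
    funext u; simp
  have hL : hLength n (Icc (0:ℝ) 1) (fun _ => x) = 0 := by
    unfold Heis.hLength
    rw [hd]
    simp [proj_zero]
  refine le_trans (csInf_le (ccDist_bddBelow _ _) ?_) (le_of_eq hL)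
  refine ⟨0, 1, fun _ => x, one_pos, ⟨⟨?_, ?_⟩, ?_⟩, rfl, rfl, rfl⟩
  · filter_upwards with t using differentiableAt_const x
  · intro s _ t _
    rw [hd]
    exact ⟨intervalIntegrable_const, by simp⟩
  · refine ⟨fun _ _ => 0, ?_⟩
    filter_upwards with t
    unfold Heis.horizCondition
    rw [hd]
    simp

lemma norm_proj_sub_le {a b : ℝ} (hab : a ≤ b) {γ : ℝ → H n} (hAC : IsAC n (Icc a b) γ) :
    ‖Heis.proj n (γ b) - Heis.proj n (γ a)‖ ≤ hLength n (Icc a b) γ := by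
  obtain ⟨hint, heq⟩ := hAC.2 a ⟨le_refl a, hab⟩ b ⟨hab, le_refl b⟩
  have h1 : Heis.proj n (γ b) - Heis.proj n (γ a) = ∫ u in a..b, Heis.proj n (deriv γ u) := by
    have h0 : Heis.proj n (γ b) - Heis.proj n (γ a) = projCLM n (γ b - γ a) :=
      (map_sub (projCLM n) _ _).symm
    rw [h0, heq, ← (projCLM n).intervalIntegral_comp_comm hint]
    simp only [projCLM_apply]
  rw [h1]
  calc ‖∫ u in a..b, Heis.proj n (deriv γ u)‖
      ≤ ∫ u in a..b, ‖Heis.proj n (deriv γ u)‖ :=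
        intervalIntegral.norm_integral_le_integral_norm hab
    _ = ∫ u in Ioc a b, ‖Heis.proj n (deriv γ u)‖ := intervalIntegral.integral_of_le hab
    _ = hLength n (Icc a b) γ := (integral_Icc_eq_integral_Ioc).symm

lemma hLength_le {a b K : ℝ} (hab : a ≤ b) {γ : ℝ → H n} (hAC : IsAC n (Icc a b) γ)
    (hbd : ∀ᵐ u ∂volume.restrict (Ioo a b), ‖Heis.proj n (deriv γ u)‖ ≤ K) :
    hLength n (Icc a b) γ ≤ K * (b - a) := by
  have hii := (hAC.2 a ⟨le_refl a, hab⟩ b ⟨hab, le_refl b⟩).1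
  have hio : IntegrableOn (deriv γ) (Ioo a b) volume :=
    ((intervalIntegrable_iff_integrableOn_Ioc_of_le hab).1 hii).mono_set Ioo_subset_Ioc_self
  have hfint : IntegrableOn (fun u => ‖Heis.proj n (deriv γ u)‖) (Ioo a b) volume := by
    exact ((projCLM n).integrable_comp hio).norm
  have hKint : IntegrableOn (fun _ : ℝ => K) (Ioo a b) volume := by
    refine integrableOn_const ?_
    rw [Real.volume_Ioo]
    exact ENNReal.ofReal_ne_top
  unfold Heis.hLength
  rw [integral_Icc_eq_integral_Ioo]
  calc ∫ u in Ioo a b, ‖Heis.proj n (deriv γ u)‖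
      ≤ ∫ _ in Ioo a b, K := integral_mono_ae hfint hKint hbd
    _ = K * (b - a) := by
        rw [setIntegral_const, Real.volume_real_Ioo_of_le hab, smul_eq_mul,
          mul_comm]

lemma isHC_reflect {a b : ℝ} {γ : ℝ → H n} (h : IsHorizontalCurve n (Icc a b) γ) :
    IsHorizontalCurve n (Icc a b) (fun u => γ (a + b - u)) := by
  set c := a + b with hc
  have hmem : ∀ u ∈ Icc a b, c - u ∈ Icc a b := by
    rintro u ⟨h1, h2⟩
    exact ⟨by linarith, by linarith⟩
  have hderiv : ∀ u, deriv (fun u => γ (c - u)) u = -deriv γ (c - u) :=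
    fun u => deriv_comp_const_sub γ c u
  obtain ⟨⟨hd, hint⟩, hh, hhor⟩ := h
  refine ⟨⟨?_, ?_⟩, ?_⟩
  · filter_upwards [ae_reflect measurableSet_Icc hmem hd] with u hu
    exact DifferentiableAt.comp u hu ((differentiableAt_const c).sub differentiableAt_id)
  · intro s hs t ht
    have hii := (hint (c - s) (hmem s hs) (c - t) (hmem t ht)).1
    have heq := (hint (c - s) (hmem s hs) (c - t) (hmem t ht)).2
    have hii2 : IntervalIntegrable (fun u => deriv γ (c - u)) volume s t := by
      have := hii.comp_sub_left c
      rw [show c - (c - s) = s by ring, show c - (c - t) = t by ring] at this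
      exact this
    have hds : (deriv fun u => γ (c - u)) = fun u => -deriv γ (c - u) :=
      funext fun u => hderiv u
    constructor
    · rw [hds]; exact hii2.neg
    · rw [hds]
      calc γ (c - t) - γ (c - s) = ∫ u in (c-s)..(c-t), deriv γ u := heq
        _ = -∫ u in (c-t)..(c-s), deriv γ u := (intervalIntegral.integral_symm _ _)
        _ = -∫ u in s..t, deriv γ (c - u) := by
            rw [intervalIntegral.integral_comp_sub_left (deriv γ) c]
        _ = ∫ u in s..t, -deriv γ (c - u) := (intervalIntegral.integral_neg).symm
  · refine ⟨fun u k => -hh (c - u) k, ?_⟩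
    filter_upwards [ae_reflect measurableSet_Icc hmem hhor] with u hu
    unfold Heis.horizCondition at hu ⊢
    rw [hderiv u, hu, ← Finset.sum_neg_distrib]
    exact Finset.sum_congr rfl fun i _ => by rw [neg_add, neg_smul, neg_smul]

lemma deriv_bound {I : Set ℝ} {γ : ℝ → H n} {K s t : ℝ}
    (hsub : Icc s t ⊆ I)
    (hd : ∀ᵐ u ∂volume.restrict I, DifferentiableAt ℝ γ u)
    (hK : 0 ≤ K)
    (hE : ∀ x ∈ I, ∀ y ∈ I, ‖Heis.proj n (γ x) - Heis.proj n (γ y)‖ ≤ K * |x - y|) :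
    ∀ᵐ u ∂volume.restrict (Ioo s t), ‖Heis.proj n (deriv γ u)‖ ≤ K := by
  have hd' := ae_restrict_of_ae_restrict_of_subset (Ioo_subset_Icc_self.trans hsub) hd
  filter_upwards [hd', ae_restrict_mem measurableSet_Ioo] with u hu huI
  have hg : HasDerivAt (fun v => projCLM n (γ v)) (projCLM n (deriv γ u)) u :=
    ((projCLM n).hasFDerivAt).comp_hasDerivAt u hu.hasDerivAt
  rw [hasDerivAt_iff_tendsto_slope] at hg
  rw [show ‖Heis.proj n (deriv γ u)‖ = ‖projCLM n (deriv γ u)‖ from rfl]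
  refine le_of_tendsto hg.norm ?_
  have hnb : Ioo s t ∈ nhdsWithin u {u}ᶜ :=
    nhdsWithin_le_nhds (Ioo_mem_nhds huI.1 huI.2)
  filter_upwards [hnb, self_mem_nhdsWithin] with v hv hvne
  have hv' : v ≠ u := hvne
  rw [slope_def_module, norm_smul]
  have h1 : ‖projCLM n (γ v) - projCLM n (γ u)‖ ≤ K * |v - u| := by
    simpa only [projCLM_apply] using
      hE v (hsub (Ioo_subset_Icc_self hv)) u (hsub (Ioo_subset_Icc_self huI))
  have habs : (0:ℝ) < |v - u| := abs_pos.2 (sub_ne_zero.2 hv')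
  calc ‖(v - u)⁻¹‖ * ‖projCLM n (γ v) - projCLM n (γ u)‖
      ≤ |v - u|⁻¹ * (K * |v - u|) := by
        rw [Real.norm_eq_abs, abs_inv]
        exact mul_le_mul_of_nonneg_left h1 (inv_nonneg.2 (abs_nonneg _))
    _ = K := by field_simp
end StatementTwoAux
/-- Lemma `lipschitzhorizontal`. If `γ : I → ℍⁿ` is a horizontal curve,
then `Lip_ℍ(γ) = Lip_𝔼(p ∘ γ)`. -/
theorem statement2 (n : ℕ) (hn : 0 < n) (I : Set ℝ) (hI : I.OrdConnected)
    (γ : ℝ → H n) (hγ : Heis.IsHorizontalCurve n I γ) :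
    lipOnCC n I γ = lipOnE n I (fun t => Heis.proj n (γ t)) := by
  have key : {K | 0 ≤ K ∧ ∀ s ∈ I, ∀ t ∈ I, Heis.ccDist n (γ s) (γ t) ≤ K * |s - t|}
      = {K | 0 ≤ K ∧ ∀ s ∈ I, ∀ t ∈ I,
          ‖Heis.proj n (γ s) - Heis.proj n (γ t)‖ ≤ K * |s - t|} := by
    ext K
    simp only [Set.mem_setOf_eq]
    constructor
    · rintro ⟨hK0, hcc⟩
      refine ⟨hK0, fun s hs t ht => ?_⟩
      rcases lt_trichotomy s t with h | h | h
      · have hIcc : Icc s t ⊆ I := hI.out hs ht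
        have hres := StatementTwoAux.isHC_mono hIcc hγ
        have hlow : ‖Heis.proj n (γ t) - Heis.proj n (γ s)‖ ≤ Heis.ccDist n (γ s) (γ t) := by
          refine le_csInf ⟨Heis.hLength n (Icc s t) γ, s, t, γ, h, hres, rfl, rfl, rfl⟩ ?_
          rintro L ⟨a, b, σ, hab, hσ, ha, hb, rfl⟩
          have := StatementTwoAux.norm_proj_sub_le hab.le hσ.1
          rwa [ha, hb] at this
        calc ‖Heis.proj n (γ s) - Heis.proj n (γ t)‖
            = ‖Heis.proj n (γ t) - Heis.proj n (γ s)‖ := norm_sub_rev _ _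
          _ ≤ Heis.ccDist n (γ s) (γ t) := hlow
          _ ≤ K * |s - t| := hcc s hs t ht
      · subst h; simp [mul_nonneg hK0 (abs_nonneg (0:ℝ))]
      · have hIcc : Icc t s ⊆ I := hI.out ht hs
        have hres := StatementTwoAux.isHC_mono hIcc hγ
        have hlow : ‖Heis.proj n (γ s) - Heis.proj n (γ t)‖ ≤ Heis.ccDist n (γ t) (γ s) := by
          refine le_csInf ⟨Heis.hLength n (Icc t s) γ, t, s, γ, h, hres, rfl, rfl, rfl⟩ ?_
          rintro L ⟨a, b, σ, hab, hσ, ha, hb, rfl⟩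
          have := StatementTwoAux.norm_proj_sub_le hab.le hσ.1
          rwa [ha, hb] at this
        calc ‖Heis.proj n (γ s) - Heis.proj n (γ t)‖
            ≤ Heis.ccDist n (γ t) (γ s) := hlow
          _ ≤ K * |t - s| := hcc t ht s hs
          _ = K * |s - t| := by rw [abs_sub_comm]
    · rintro ⟨hK0, hE⟩
      refine ⟨hK0, fun s hs t ht => ?_⟩
      rcases lt_trichotomy s t with h | h | h
      · have hIcc : Icc s t ⊆ I := hI.out hs ht
        have hres := StatementTwoAux.isHC_mono hIcc hγ
        have hbd := StatementTwoAux.deriv_bound hIcc hγ.1.1 hK0 hE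
        calc Heis.ccDist n (γ s) (γ t)
            ≤ Heis.hLength n (Icc s t) γ := StatementTwoAux.ccDist_le h hres
          _ ≤ K * (t - s) := StatementTwoAux.hLength_le h.le hres.1 hbd
          _ = K * |s - t| := by rw [abs_sub_comm, abs_of_nonneg (by linarith)]
      · subst h
        calc Heis.ccDist n (γ s) (γ s) ≤ 0 := StatementTwoAux.ccDist_self_nonpos _
          _ ≤ K * |s - s| := by simp
      · have hIcc : Icc t s ⊆ I := hI.out ht hs
        have hres := StatementTwoAux.isHC_mono hIcc hγ
        have href := StatementTwoAux.isHC_reflect hres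
        have hbd0 := StatementTwoAux.deriv_bound hIcc hγ.1.1 hK0 hE
        have hmemIoo : ∀ u ∈ Ioo t s, (t + s) - u ∈ Ioo t s := by
          rintro u ⟨h1, h2⟩; exact ⟨by linarith, by linarith⟩
        have hbd : ∀ᵐ u ∂volume.restrict (Ioo t s),
            ‖Heis.proj n (deriv (fun u => γ (t + s - u)) u)‖ ≤ K := by
          filter_upwards [StatementTwoAux.ae_reflect measurableSet_Ioo hmemIoo hbd0] with u hu
          rw [deriv_comp_const_sub γ (t + s) u, StatementTwoAux.proj_neg, norm_neg]
          exact hu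
        have h1 : Heis.ccDist n (γ s) (γ t)
            ≤ Heis.hLength n (Icc t s) (fun u => γ (t + s - u)) := by
          have := StatementTwoAux.ccDist_le h href
          rwa [show t + s - t = s by ring, show t + s - s = t by ring] at this
        calc Heis.ccDist n (γ s) (γ t)
            ≤ Heis.hLength n (Icc t s) (fun u => γ (t + s - u)) := h1
          _ ≤ K * (s - t) := StatementTwoAux.hLength_le h.le href.1 hbd
          _ = K * |s - t| := by rw [abs_of_nonneg (by linarith)]
  exact congrArg sInf key
end
end

section
/- There exists a set N ⊂ ℍⁿ which has Lebesgue measure zero (with respect to Lebesgue measure on ℝ^{2n+1}), is a countable intersection of open sets (G_δ), and contains every straight line segment in ℝ^{2n+1} which is a horizontal curve and joins two points of ℚ^{2n+1}. Moreover, any such set N contains: (1) the image of the line t ↦ x + tE(x) whenever x ∈ ℚ^{2n+1} and E ∈ V is a linear combination of {X_i, Y_i : 1 ≤ i ≤ n} with rational coefficients; and (2) the image of every curve x·γ_y for x, y ∈ ℚ^{2n+1} with p(y) ≠ 0, where γ_y is the piecewise-linear horizontal curve joining 0 to y consisting of the segment from 0 to (1/2)(a − bc/L², b + ac/L², 0)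 followed by the segment from there to y = (a,b,c), with L = |p(y)|. -/
open MeasureTheory Filter Set

noncomputable section

/-- `N` contains every straight line segment which is a horizontal curve and joins two
points of `ℚ^{2n+1}`. -/
def ContainsRatLines (n : ℕ) (N : Set (H n)) : Prop :=
  ∀ x y : H n, Heis.isRat n x → Heis.isRat n y →
    Heis.IsHorizontalCurve n (Set.Icc 0 1) (fun t : ℝ => x + t • (y - x)) →
    (fun t : ℝ => x + t • (y - x)) '' Set.Icc 0 1 ⊆ N

section Aux
open Heis ENNReal
variable {n : ℕ}

lemma tri (k : Fin (2*n+1)) :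
    (∃ j : Fin n, k = idx₁ n j) ∨ (∃ j : Fin n, k = idx₂ n j) ∨ k = idxc n := by
  rcases k with ⟨k, hk⟩
  by_cases h1 : k < n
  · exact Or.inl ⟨⟨k, h1⟩, rfl⟩
  by_cases h2 : k < 2*n
  · exact Or.inr (Or.inl ⟨⟨k - n, by omega⟩, by
      apply Fin.ext; show k = n + (k - n); omega⟩)
  · exact Or.inr (Or.inr (by apply Fin.ext; show k = 2*n; omega))

lemma sumvf_apply (q q' : Fin n → ℝ) (z : H n) (k : Fin (2*n+1)) :
    (∑ i, (q i • Xvf n i z + q' i • Yvf n i z)) k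
      = ∑ i, (q i * ((if k = idx₁ n i then 1 else 0)
            + 2 * z (idx₂ n i) * (if k = idxc n then 1 else 0))
          + q' i * ((if k = idx₂ n i then 1 else 0)
            - 2 * z (idx₁ n i) * (if k = idxc n then 1 else 0))) := by
  rw [WithLp.ofLp_sum, Finset.sum_apply k Finset.univ _]
  refine Finset.sum_congr rfl fun i _ => ?_
  simp only [Xvf, Yvf, PiLp.add_apply, PiLp.sub_apply, PiLp.smul_apply,
    EuclideanSpace.single_apply, smul_eq_mul]

lemma eval₁ (q q' : Fin n → ℝ) (z : H n) (j : Fin n) :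
    (∑ i, (q i • Xvf n i z + q' i • Yvf n i z)) (idx₁ n j) = q j := by
  rw [sumvf_apply, Finset.sum_eq_single j]
  · have hj := j.2
    have e1 : idx₁ n j = idx₁ n j := rfl
    have e2 : ¬ (idx₁ n j = idx₂ n j) := by simp [idx₁, idx₂, Fin.ext_iff]; omega
    have e3 : ¬ (idx₁ n j = idxc n) := by simp [idx₁, idxc, Fin.ext_iff]; omega
    simp [e2, e3]
  · intro i _ hij
    have e1 : ¬ (idx₁ n j = idx₁ n i) := by
      simp [idx₁, Fin.ext_iff]; exact fun h => hij (Fin.ext h.symm)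
    have e2 : ¬ (idx₁ n j = idx₂ n i) := by
      have := j.2; simp [idx₁, idx₂, Fin.ext_iff]; omega
    have e3 : ¬ (idx₁ n j = idxc n) := by
      have := j.2; simp [idx₁, idxc, Fin.ext_iff]; omega
    simp [e1, e2, e3]
  · simp

lemma eval₂ (q q' : Fin n → ℝ) (z : H n) (j : Fin n) :
    (∑ i, (q i • Xvf n i z + q' i • Yvf n i z)) (idx₂ n j) = q' j := by
  rw [sumvf_apply, Finset.sum_eq_single j]
  · have hj := j.2
    have e2 : ¬ (idx₂ n j = idx₁ n j) := by simp [idx₁, idx₂, Fin.ext_iff]; omega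
    have e3 : ¬ (idx₂ n j = idxc n) := by simp [idx₂, idxc, Fin.ext_iff]; omega
    simp [e2, e3]
  · intro i _ hij
    have e1 : ¬ (idx₂ n j = idx₂ n i) := by
      simp [idx₂, Fin.ext_iff]; intro h; exact absurd (Fin.ext (by omega : i.1 = j.1)) hij
    have e2 : ¬ (idx₂ n j = idx₁ n i) := by
      have := i.2; simp [idx₁, idx₂, Fin.ext_iff]; omega
    have e3 : ¬ (idx₂ n j = idxc n) := by
      have := j.2; simp [idx₂, idxc, Fin.ext_iff]; omega
    simp [e1, e2, e3]
  · simp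

lemma evalc (q q' : Fin n → ℝ) (z : H n) :
    (∑ i, (q i • Xvf n i z + q' i • Yvf n i z)) (idxc n)
      = 2 * ∑ i, (q i * z (idx₂ n i) - q' i * z (idx₁ n i)) := by
  rw [sumvf_apply, Finset.mul_sum]
  refine Finset.sum_congr rfl fun i _ => ?_
  have := i.2
  have e1 : ¬ (idxc n = idx₁ n i) := by simp [idx₁, idxc, Fin.ext_iff]; omega
  have e2 : ¬ (idxc n = idx₂ n i) := by simp [idx₂, idxc, Fin.ext_iff]; omega
  simp [e1, e2]
  ring

end Aux
section Aux2
open Heis ENNReal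
variable {n : ℕ}

def Bsum (u v : H n) : ℝ :=
  ∑ i : Fin n, (u (idx₁ n i) * v (idx₂ n i) - u (idx₂ n i) * v (idx₁ n i))

lemma lineHoriz (P w : H n) (hw : w (idxc n) = 2 * Bsum w P) :
    IsHorizontalCurve n (Set.Icc 0 1) (fun t : ℝ => P + t • w) := by
  have hderiv : ∀ t : ℝ, HasDerivAt (fun t : ℝ => P + t • w) w t := by
    intro t
    simpa using ((hasDerivAt_id t).smul_const w).const_add P
  have hde : deriv (fun t : ℝ => P + t • w) = fun _ => w := funext fun t => (hderiv t).deriv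
  constructor
  · constructor
    · exact Filter.Eventually.of_forall fun t => (hderiv t).differentiableAt
    · intro s _ t _
      rw [hde]
      refine ⟨intervalIntegrable_const, ?_⟩
      rw [intervalIntegral.integral_const]
      module
  · refine ⟨fun _ j => w ⟨j.1, by omega⟩, Filter.Eventually.of_forall fun t => ?_⟩
    show deriv (fun t : ℝ => P + t • w) t = _
    rw [hde]
    show w = ∑ i, (w (idx₁ n i) • Xvf n i (P + t • w) + w (idx₂ n i) • Yvf n i (P + t • w))
    ext k
    rcases tri k with ⟨j, rfl⟩ | ⟨j, rfl⟩ | rfl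
    · rw [eval₁]
    · rw [eval₂]
    · rw [evalc, hw, Bsum]
      congr 1
      refine Finset.sum_congr rfl fun i _ => ?_
      simp only [PiLp.add_apply, PiLp.smul_apply, smul_eq_mul]
      ring

end Aux2
section Aux3
open Heis ENNReal
variable {n : ℕ}

def ratSet (n : ℕ) : Set (H n) := {x | isRat n x}

lemma countable_ratSet : (ratSet n).Countable := by
  have h : ratSet n ⊆ Set.range (fun f : Fin (2*n+1) → ℚ => (WithLp.toLp 2 (fun k => (f k : ℝ)) : H n)) := by
    intro x hx
    choose f hf using hx
    exact ⟨f, by ext k; exact (hf k).symm⟩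
  exact (Set.countable_range _).mono h

lemma seg_null (hn : 0 < n) (x y : H n) :
    volume ((fun t : ℝ => x + t • (y - x)) '' Set.Icc 0 1) = 0 := by
  have hsub : (fun t : ℝ => x + t • (y - x)) '' Set.Icc 0 1
      ⊆ (affineSpan ℝ ({x, y} : Set (H n)) : Set (H n)) := by
    rintro - ⟨t, -, rfl⟩
    have hm := AffineMap.lineMap_mem_affineSpan_pair t x y
    have he : (AffineMap.lineMap x y t : H n) = x + t • (y - x) := by
      simp only [AffineMap.lineMap_apply, vsub_eq_sub, vadd_eq_add]
      module
    rwa [he] at hm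
  refine measure_mono_null hsub (MeasureTheory.Measure.addHaar_affineSubspace volume _ ?_)
  intro htop
  have hdir : (affineSpan ℝ ({x, y} : Set (H n))).direction = ⊤ := by
    rw [htop]; exact AffineSubspace.direction_top ℝ _ _
  rw [direction_affineSpan, vectorSpan_pair] at hdir
  by_cases hxy : x -ᵥ y = 0
  · rw [hxy, Submodule.span_zero_singleton] at hdir
    exact bot_ne_top hdir
  · have h1 := finrank_span_singleton (K := ℝ) hxy
    rw [hdir, finrank_top] at h1
    have h2 : Module.finrank ℝ (H n) = 2*n+1 := finrank_euclideanSpace_fin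
    omega

def Sset (n : ℕ) : Set (H n) :=
  ⋃ x ∈ ratSet n, ⋃ y ∈ ratSet n, (fun t : ℝ => x + t • (y - x)) '' Set.Icc 0 1

lemma Sset_null (hn : 0 < n) : volume (Sset n) = 0 :=
  (measure_biUnion_null_iff countable_ratSet).2 fun x _ =>
    (measure_biUnion_null_iff countable_ratSet).2 fun y _ => seg_null hn x y

lemma part1 (hn : 0 < n) : ∃ N : Set (H n), volume N = 0 ∧
    (∃ U : ℕ → Set (H n), (∀ k, IsOpen (U k)) ∧ N = ⋂ k, U k) ∧
    ContainsRatLines n N := by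
  have hS := Sset_null (n := n) hn
  have hU : ∀ k : ℕ, ∃ U : Set (H n), Sset n ⊆ U ∧ IsOpen U ∧ volume U < ((k : ℝ≥0∞))⁻¹ := by
    intro k
    obtain ⟨U, h1, h2, h3⟩ := Set.exists_isOpen_lt_of_lt (Sset n) ((k : ℝ≥0∞))⁻¹
      (by rw [hS]; exact ENNReal.inv_pos.2 (ENNReal.natCast_ne_top k))
    exact ⟨U, h1, h2, h3⟩
  choose U hU1 hU2 hU3 using hU
  refine ⟨⋂ k, U k, ?_, ⟨U, hU2, rfl⟩, ?_⟩
  · by_contra h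
    obtain ⟨k, hk⟩ := ENNReal.exists_inv_nat_lt h
    exact hk.not_ge ((measure_mono (Set.iInter_subset _ k)).trans (hU3 k).le)
  · intro x y hx hy _ p hp
    refine Set.mem_iInter.2 fun k => hU1 k ?_
    exact Set.mem_biUnion hx (Set.mem_biUnion hy hp)

end Aux3
section Aux4
open Heis ENNReal
variable {n : ℕ}

def RR : Subfield ℝ := (Rat.castHom ℝ).fieldRange

lemma ratMem (q : ℚ) : (q : ℝ) ∈ RR := ⟨q, rfl⟩

lemma isRat_iff (x : H n) : Heis.isRat n x ↔ ∀ k, x k ∈ RR := by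
  constructor
  · intro h k; obtain ⟨q, hq⟩ := h k; exact ⟨q, hq.symm⟩
  · intro h k; obtain ⟨q, hq⟩ := h k; exact ⟨q, hq.symm⟩

lemma mkH₁ (a b : Fin n → ℝ) (c : ℝ) (j : Fin n) : mkH n a b c (idx₁ n j) = a j := by
  have hj := j.2
  simp only [mkH, idx₁, WithLp.ofLp_toLp]
  rw [dif_pos hj]

lemma mkH₂ (a b : Fin n → ℝ) (c : ℝ) (j : Fin n) : mkH n a b c (idx₂ n j) = b j := by
  have hj := j.2
  simp only [mkH, idx₂, WithLp.ofLp_toLp]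
  rw [dif_neg (by omega), dif_pos (by omega)]
  congr 1
  exact Fin.ext (show n + j.1 - n = j.1 by omega)

lemma mkHc (a b : Fin n → ℝ) (c : ℝ) : mkH n a b c (idxc n) = c := by
  simp only [mkH, idxc, WithLp.ofLp_toLp]
  rw [dif_neg (by omega), dif_neg (by omega)]

lemma Bsum_anti (u v : H n) : Bsum u v = -Bsum v u := by
  rw [Bsum, Bsum, ← Finset.sum_neg_distrib]
  exact Finset.sum_congr rfl fun i _ => by ring

lemma Bsum_add_right (u v w : H n) : Bsum u (v + w) = Bsum u v + Bsum u w := by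
  rw [Bsum, Bsum, Bsum, ← Finset.sum_add_distrib]
  exact Finset.sum_congr rfl fun i _ => by simp only [PiLp.add_apply]; ring

lemma Bsum_smul_right (u v : H n) (c : ℝ) : Bsum u (c • v) = c * Bsum u v := by
  rw [Bsum, Bsum, Finset.mul_sum]
  exact Finset.sum_congr rfl fun i _ => by simp only [PiLp.smul_apply, smul_eq_mul]; ring

lemma Bsum_zero_right (u : H n) : Bsum u 0 = 0 := by
  rw [Bsum]
  exact Finset.sum_eq_zero fun i _ => by simp

lemma Bsum_mem (u v : H n) (hu : ∀ k, u k ∈ RR) (hv : ∀ k, v k ∈ RR) : Bsum u v ∈ RR :=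
  Subfield.sum_mem _ fun i _ => sub_mem (mul_mem (hu _) (hv _)) (mul_mem (hu _) (hv _))

lemma Hmul_apply (x z : H n) (k : Fin (2*n+1)) :
    Heis.Hmul n x z k = x k + z k - (if (k : ℕ) = 2*n then 2 * Bsum x z else 0) := rfl

lemma Hmul_zero (x : H n) : Heis.Hmul n x 0 = x := by
  ext k
  rw [Hmul_apply, Bsum_zero_right]
  simp

lemma Hmul_affine (x z z' : H n) (s : ℝ) :
    Heis.Hmul n x (z + s • z')
      = Heis.Hmul n x z + s • (Heis.Hmul n x (z + z') - Heis.Hmul n x z) := by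
  ext k
  simp only [Hmul_apply, PiLp.add_apply, PiLp.smul_apply, PiLp.sub_apply, smul_eq_mul,
    Bsum_add_right, Bsum_smul_right]
  split_ifs <;> ring

lemma Hmul_mem (x z : H n) (hx : ∀ k, x k ∈ RR) (hz : ∀ k, z k ∈ RR) :
    ∀ k, Heis.Hmul n x z k ∈ RR := by
  intro k
  rw [Hmul_apply]
  refine sub_mem (add_mem (hx k) (hz k)) ?_
  split_ifs
  · exact mul_mem (ratMem 2) (Bsum_mem x z hx hz)
  · exact zero_mem _

lemma normsq (y : H n) :
    ‖Heis.proj n y‖^2 = ∑ i : Fin n, (y (idx₁ n i)^2 + y (idx₂ n i)^2) := by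
  have h0 : ‖Heis.proj n y‖^2 = ∑ j : Fin (2*n), (Heis.proj n y j)^2 := by
    rw [EuclideanSpace.norm_eq, Real.sq_sqrt (by positivity)]
    exact Finset.sum_congr rfl fun j _ => by rw [Real.norm_eq_abs, sq_abs]
  rw [h0,
    Fintype.sum_equiv (finCongr (two_mul n))
      (fun j : Fin (2*n) => (Heis.proj n y j)^2)
      (fun j : Fin (n+n) => y ⟨j.1, by omega⟩ ^ 2) (fun j => rfl),
    Fin.sum_univ_add, ← Finset.sum_add_distrib]
  exact Finset.sum_congr rfl fun i _ => rfl

end Aux4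
section Aux5
open Heis ENNReal
variable {n : ℕ}

lemma w₁e1 (y : H n) (j : Fin n) :
    w₁ n y (idx₁ n j) = y (idx₁ n j) - y (idx₂ n j) * y (idxc n) / ‖proj n y‖^2 := mkH₁ _ _ _ j
lemma w₁e2 (y : H n) (j : Fin n) :
    w₁ n y (idx₂ n j) = y (idx₂ n j) + y (idx₁ n j) * y (idxc n) / ‖proj n y‖^2 := mkH₂ _ _ _ j
lemma w₁ec (y : H n) : w₁ n y (idxc n) = 0 := mkHc _ _ _
lemma w₂e1 (y : H n) (j : Fin n) :
    w₂ n y (idx₁ n j) = y (idx₁ n j) + y (idx₂ n j) * y (idxc n) / ‖proj n y‖^2 := mkH₁ _ _ _ j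
lemma w₂e2 (y : H n) (j : Fin n) :
    w₂ n y (idx₂ n j) = y (idx₂ n j) - y (idx₁ n j) * y (idxc n) / ‖proj n y‖^2 := mkH₂ _ _ _ j
lemma w₂ec (y : H n) : w₂ n y (idxc n) = 2 * y (idxc n) := mkHc _ _ _

lemma w₁_mem (y : H n) (hy : ∀ k, y k ∈ RR) (hL : ‖proj n y‖^2 ∈ RR) :
    ∀ k, w₁ n y k ∈ RR := by
  intro k
  rcases tri k with ⟨j, rfl⟩ | ⟨j, rfl⟩ | rfl
  · rw [w₁e1]; exact sub_mem (hy _) (div_mem (mul_mem (hy _) (hy _)) hL)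
  · rw [w₁e2]; exact add_mem (hy _) (div_mem (mul_mem (hy _) (hy _)) hL)
  · rw [w₁ec]; exact zero_mem _

lemma w₂_mem (y : H n) (hy : ∀ k, y k ∈ RR) (hL : ‖proj n y‖^2 ∈ RR) :
    ∀ k, w₂ n y k ∈ RR := by
  intro k
  rcases tri k with ⟨j, rfl⟩ | ⟨j, rfl⟩ | rfl
  · rw [w₂e1]; exact add_mem (hy _) (div_mem (mul_mem (hy _) (hy _)) hL)
  · rw [w₂e2]; exact sub_mem (hy _) (div_mem (mul_mem (hy _) (hy _)) hL)
  · rw [w₂ec]; exact mul_mem (ratMem 2) (hy _)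

lemma L2_mem (y : H n) (hy : ∀ k, y k ∈ RR) : ‖proj n y‖^2 ∈ RR := by
  rw [normsq]
  refine Subfield.sum_mem _ fun i _ => add_mem ?_ ?_
  · rw [sq]; exact mul_mem (hy _) (hy _)
  · rw [sq]; exact mul_mem (hy _) (hy _)

lemma key_identity (y : H n) (hL : ‖proj n y‖^2 ≠ 0) :
    Bsum (w₂ n y) (w₁ n y) = 2 * y (idxc n) := by
  have h1 : Bsum (w₂ n y) (w₁ n y)
      = ∑ i : Fin n, (y (idx₁ n i)^2 + y (idx₂ n i)^2) * (2 * y (idxc n) / ‖proj n y‖^2) := by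
    rw [Bsum]
    refine Finset.sum_congr rfl fun i _ => ?_
    rw [w₁e1, w₁e2, w₂e1, w₂e2]
    field_simp
    ring
  rw [h1, ← Finset.sum_mul, ← normsq]
  field_simp
  have hL' : ‖proj n y‖ ≠ 0 := fun h => hL (by rw [h]; ring)
  field_simp

lemma transHoriz (x z z' : H n)
    (hz : (z' - z) (idxc n) = 2 * Bsum (z' - z) z) :
    (Heis.Hmul n x z' - Heis.Hmul n x z) (idxc n)
      = 2 * Bsum (Heis.Hmul n x z' - Heis.Hmul n x z) (Heis.Hmul n x z) := by
  have hd : ∀ k : Fin (2*n+1), (Heis.Hmul n x z' - Heis.Hmul n x z) k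
      = (z' - z) k - (if (k : ℕ) = 2*n then 2 * Bsum x (z' - z) else 0) := by
    intro k
    have : Bsum x z' = Bsum x (z' - z) + Bsum x z := by
      simpa [sub_add_cancel] using Bsum_add_right x (z' - z) z
    simp only [PiLp.sub_apply, Hmul_apply, this]
    split_ifs <;> ring
  have hB : Bsum (Heis.Hmul n x z' - Heis.Hmul n x z) (Heis.Hmul n x z)
      = Bsum (z' - z) x + Bsum (z' - z) z := by
    rw [Bsum, Bsum, Bsum, ← Finset.sum_add_distrib]
    refine Finset.sum_congr rfl fun i _ => ?_
    have e1 : ¬((idx₁ n i : ℕ) = 2*n) := by have := i.2; simp [idx₁]; omega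
    have e2 : ¬((idx₂ n i : ℕ) = 2*n) := by have := i.2; simp [idx₂]; omega
    rw [hd, hd, if_neg e1, if_neg e2]
    simp only [Hmul_apply, if_neg e1, if_neg e2, PiLp.sub_apply]
    ring
  rw [hd, hB]
  have e3 : ((idxc n : Fin (2*n+1)) : ℕ) = 2*n := rfl
  rw [if_pos e3, hz]
  have := Bsum_anti (z' - z) x
  have h4 : Bsum x (z' - z) = - Bsum (z' - z) x := Bsum_anti x (z' - z)
  rw [h4]
  ring

end Aux5
section Aux6
open Heis ENNReal
variable {n : ℕ}

lemma Bsum_smul_left (u v : H n) (c : ℝ) : Bsum (c • u) v = c * Bsum u v := by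
  rw [Bsum, Bsum, Finset.mul_sum]
  exact Finset.sum_congr rfl fun i _ => by simp only [PiLp.smul_apply, smul_eq_mul]; ring

lemma ratMem' (r : ℝ) (q : ℚ) (h : r = (q : ℝ)) : r ∈ RR := ⟨q, h.symm⟩

lemma Bsum_self (u : H n) : Bsum u u = 0 := by
  rw [Bsum]
  exact Finset.sum_eq_zero fun i _ => by ring

end Aux6

/-- Lemma `uds`. There is a Lebesgue measure zero `G_δ` set
`N ⊂ ℍⁿ` containing all straight lines which are horizontal curves joining pairs of
points of `ℚ^{2n+1}`; moreover any such set contains (1) the image of the line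
`t ↦ x + tE(x)` for rational `x` and rational `E ∈ V`, and (2) the image of each curve
`x·γ_y` for rational `x, y` with `p(y) ≠ 0`. -/
theorem statement8 (n : ℕ) (hn : 0 < n) :
    (∃ N : Set (H n), volume N = 0 ∧
      (∃ U : ℕ → Set (H n), (∀ k, IsOpen (U k)) ∧ N = ⋂ k, U k) ∧
      ContainsRatLines n N) ∧
    (∀ N : Set (H n), volume N = 0 →
      (∃ U : ℕ → Set (H n), (∀ k, IsOpen (U k)) ∧ N = ⋂ k, U k) →
      ContainsRatLines n N →
      ((∀ (x : H n) (E : H n → H n), Heis.isRat n x →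
        (∃ q q' : Fin n → ℚ, ∀ z, E z = ∑ i,
          ((q i : ℝ) • Heis.Xvf n i z + (q' i : ℝ) • Heis.Yvf n i z)) →
        Set.range (fun t : ℝ => x + t • E x) ⊆ N) ∧
      (∀ x y : H n, Heis.isRat n x → Heis.isRat n y → Heis.proj n y ≠ 0 →
        (fun t : ℝ => Heis.Hmul n x (Heis.goodCurve n y t)) '' Set.Icc 0 1 ⊆ N))) := by
  open Heis in
  refine ⟨part1 hn, ?_⟩
  intro N hN0 hGδ hRL
  constructor
  · -- (1) rational lines through rational points in rational horizontal directions
    rintro x E hx ⟨q, q', hEeq⟩ p ⟨t, rfl⟩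
    have hx' := (isRat_iff x).1 hx
    have hEx : E x = ∑ i, ((q i : ℝ) • Xvf n i x + (q' i : ℝ) • Yvf n i x) := hEeq x
    have e1 : ∀ j, E x (idx₁ n j) = (q j : ℝ) := fun j => by rw [hEx]; exact eval₁ _ _ _ j
    have e2 : ∀ j, E x (idx₂ n j) = (q' j : ℝ) := fun j => by rw [hEx]; exact eval₂ _ _ _ j
    have ec : E x (idxc n)
        = 2 * ∑ i, ((q i : ℝ) * x (idx₂ n i) - (q' i : ℝ) * x (idx₁ n i)) := by
      rw [hEx]; exact evalc _ _ _
    have hExm : ∀ k, E x k ∈ RR := by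
      intro k; rcases tri k with ⟨j, rfl⟩ | ⟨j, rfl⟩ | rfl
      · rw [e1]; exact ratMem _
      · rw [e2]; exact ratMem _
      · rw [ec]
        exact mul_mem (ratMem 2) (Subfield.sum_mem _ fun i _ =>
          sub_mem (mul_mem (ratMem _) (hx' _)) (mul_mem (ratMem _) (hx' _)))
    obtain ⟨M, hM⟩ := exists_nat_ge |t|
    set c : ℝ := (M : ℝ) + 1 with hc
    have hc0 : 0 < c := by positivity
    have hct : |t| ≤ c := hM.trans (by simp [hc])
    obtain ⟨hct1, hct2⟩ := abs_le.1 hct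
    have hcm : c ∈ RR := ratMem' c ((M : ℚ) + 1) (by rw [hc]; push_cast; ring)
    have hum : Heis.isRat n (x + (-c) • E x) := (isRat_iff _).2 fun k => by
      simp only [PiLp.add_apply, PiLp.smul_apply, smul_eq_mul]
      exact add_mem (hx' k) (mul_mem (neg_mem hcm) (hExm k))
    have hvm : Heis.isRat n (x + c • E x) := (isRat_iff _).2 fun k => by
      simp only [PiLp.add_apply, PiLp.smul_apply, smul_eq_mul]
      exact add_mem (hx' k) (mul_mem hcm (hExm k))
    have hvu : (x + c • E x) - (x + (-c) • E x) = (2*c) • E x := by module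
    have hBS : Bsum (E x) (x + (-c) • E x) = Bsum (E x) x := by
      rw [Bsum_add_right, Bsum_smul_right, Bsum_self]; ring
    have hcond : ((x + c • E x) - (x + (-c) • E x)) (idxc n)
        = 2 * Bsum ((x + c • E x) - (x + (-c) • E x)) (x + (-c) • E x) := by
      rw [hvu, Bsum_smul_left, hBS]
      have hBx : Bsum (E x) x
          = ∑ i, ((q i : ℝ) * x (idx₂ n i) - (q' i : ℝ) * x (idx₁ n i)) :=
        Finset.sum_congr rfl fun i _ => by rw [e1, e2]
      simp only [PiLp.smul_apply, smul_eq_mul]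
      rw [ec, hBx]
      ring
    have hcurve := lineHoriz (x + (-c) • E x) ((x + c • E x) - (x + (-c) • E x)) hcond
    have himg := hRL _ _ hum hvm hcurve
    have hs0 : (0:ℝ) ≤ (t + c) / (2*c) := div_nonneg (by linarith) (by linarith)
    have hs1 : (t + c) / (2*c) ≤ 1 := (div_le_one (by linarith)).2 (by linarith)
    have hpt : (x + (-c) • E x) + ((t + c) / (2*c)) • ((x + c • E x) - (x + (-c) • E x))
        = x + t • E x := by
      rw [hvu, smul_smul, div_mul_cancel₀ _ (by linarith : (2*c) ≠ 0)]
      module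
    exact himg ⟨(t + c) / (2*c), ⟨hs0, hs1⟩, hpt⟩
  · -- (2) translated good curves
    rintro x y hx hy hpy p ⟨t, ht, rfl⟩
    have hx' := (isRat_iff x).1 hx
    have hy' := (isRat_iff y).1 hy
    have hL2m : ‖proj n y‖^2 ∈ RR := L2_mem y hy'
    have hLne : ‖proj n y‖^2 ≠ 0 := pow_ne_zero 2 (norm_ne_zero_iff.2 hpy)
    have hw1m := w₁_mem y hy' hL2m
    have hw2m := w₂_mem y hy' hL2m
    have hhalf : (1/2 : ℝ) ∈ RR := ratMem' _ (1/2) (by norm_num)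
    by_cases hth : t ≤ 1/2
    · -- first segment
      have hgc : goodCurve n y t = t • w₁ n y := by simp only [goodCurve]; rw [if_pos hth]
      have hBm : Heis.isRat n (Hmul n x (w₁ n y)) :=
        (isRat_iff _).2 (Hmul_mem _ _ hx' hw1m)
      have haff : Hmul n x (goodCurve n y t)
          = x + t • (Hmul n x (w₁ n y) - x) := by
        rw [hgc]
        have h0 := Hmul_affine x (0 : H n) (w₁ n y) t
        simpa [Hmul_zero] using h0
      have hz : ((w₁ n y - 0) : H n) (idxc n) = 2 * Bsum (w₁ n y - 0) (0 : H n) := by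
        simp only [sub_zero, Bsum_zero_right, w₁ec]
        ring
      have hcond := transHoriz x (0 : H n) (w₁ n y) hz
      rw [Hmul_zero] at hcond
      exact hRL x (Hmul n x (w₁ n y)) hx hBm
        (lineHoriz x (Hmul n x (w₁ n y) - x) hcond)
        ⟨t, ⟨ht.1, by linarith⟩, haff.symm⟩
    · -- second segment
      have hgc : goodCurve n y t = (1/2 : ℝ) • w₁ n y + (t - 1/2) • w₂ n y := by
        simp only [goodCurve]; rw [if_neg hth]
      have hQm : Heis.isRat n (Hmul n x ((1/2 : ℝ) • w₁ n y)) :=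
        (isRat_iff _).2 (Hmul_mem _ _ hx' fun k => by
          simp only [PiLp.smul_apply, smul_eq_mul]
          exact mul_mem hhalf (hw1m k))
      have hBm : Heis.isRat n (Hmul n x ((1/2 : ℝ) • w₁ n y + w₂ n y)) :=
        (isRat_iff _).2 (Hmul_mem _ _ hx' fun k => by
          simp only [PiLp.add_apply, PiLp.smul_apply, smul_eq_mul]
          exact add_mem (mul_mem hhalf (hw1m k)) (hw2m k))
      have haff : Hmul n x (goodCurve n y t)
          = Hmul n x ((1/2 : ℝ) • w₁ n y)
            + (t - 1/2) • (Hmul n x ((1/2 : ℝ) • w₁ n y + w₂ n y)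
              - Hmul n x ((1/2 : ℝ) • w₁ n y)) := by
        rw [hgc]
        exact Hmul_affine x ((1/2 : ℝ) • w₁ n y) (w₂ n y) (t - 1/2)
      have hz : (((1/2 : ℝ) • w₁ n y + w₂ n y) - (1/2 : ℝ) • w₁ n y) (idxc n)
          = 2 * Bsum (((1/2 : ℝ) • w₁ n y + w₂ n y) - (1/2 : ℝ) • w₁ n y)
              ((1/2 : ℝ) • w₁ n y) := by
        have hsimp : ((1/2 : ℝ) • w₁ n y + w₂ n y) - (1/2 : ℝ) • w₁ n y = w₂ n y := by
          module
        rw [hsimp, Bsum_smul_right, key_identity y hLne, w₂ec]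
        ring
      have hcond := transHoriz x ((1/2 : ℝ) • w₁ n y) ((1/2 : ℝ) • w₁ n y + w₂ n y) hz
      exact hRL _ _ hQm hBm
        (lineHoriz (Hmul n x ((1/2 : ℝ) • w₁ n y))
          (Hmul n x ((1/2 : ℝ) • w₁ n y + w₂ n y) - Hmul n x ((1/2 : ℝ) • w₁ n y)) hcond)
        ⟨t - 1/2, ⟨by linarith [lt_of_not_ge hth], by linarith [ht.2]⟩, haff.symm⟩
end
end
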